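/- (No-signalling from terminality, Bell scenario.) Let C be a symmetric monoidal category whose unit I is terminal. Let Φ : X_A ⊗ X_B → Y_A ⊗ Y_B be any morphism of the form Φ = (f_A ⊗ f_B) ∘ (id_{X_A} ⊗ σ ⊗ id_{X_B}) ∘ (id ⊗ c ⊗ id) for a shared state c : I → S_A ⊗ S_B, where f_A : X_A ⊗ S_A → Y_A and f_B : S_B ⊗ X_B → Y_B (with suitable associators). Then discarding B's output yields (⊤_{Y_B}) applied to Φ equal to Φ' ⊗ ⊤_{X_B} for some morphism Φ' : X_A → Y_A, i.e., (id_{Y_A} ⊗ ⊤_{Y_B}) ∘ Φ = ρ_{Y_A}^{-1} ∘ Φ' ∘ ρ_{X_A} ∘ (id_{X_A} ⊗ ⊤_{X_B}) where ρ is the right unitor. In particular B's input cannot affect A's output. -/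

import Mathlib

open CategoryTheory CategoryTheory.Limits CategoryTheory.MonoidalCategory

theorem no_signalling_bell
    (C : Type*) [Category C] [MonoidalCategory C] [SymmetricCategory C]
    (hT : IsTerminal (𝟙_ C))
    (XA XB YA YB SA SB : C)
    (c : 𝟙_ C ⟶ SA ⊗ SB) (fA : XA ⊗ SA ⟶ YA) (fB : SB ⊗ XB ⟶ YB)
    (Φ : XA ⊗ XB ⟶ YA ⊗ YB)
    (hΦ : Φ = ((ρ_ XA).inv ⊗ₘ 𝟙 XB) ≫ ((𝟙 XA ⊗ₘ c) ⊗ₘ 𝟙 XB) ≫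
      ((α_ XA SA SB).inv ⊗ₘ 𝟙 XB) ≫ (α_ (XA ⊗ SA) SB XB).hom ≫ (fA ⊗ₘ fB)) :
    ∃ Φ' : XA ⟶ YA,
      Φ ≫ (𝟙 YA ⊗ₘ hT.from YB) =
        (𝟙 XA ⊗ₘ hT.from XB) ≫ (ρ_ XA).hom ≫ Φ' ≫ (ρ_ YA).inv := by
  have hYB : fB ≫ hT.from YB = (SB ◁ hT.from XB) ≫ (ρ_ SB).hom ≫ hT.from SB :=
    hT.hom_ext _ _
  refine ⟨(ρ_ XA).inv ≫ (𝟙 XA ⊗ₘ (c ≫ (𝟙 SA ⊗ₘ hT.from SB) ≫ (ρ_ SA).hom)) ≫ fA, ?_⟩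
  subst hΦ
  simp only [Category.assoc]
  rw [tensorHom_comp_tensorHom fA fB (𝟙 YA) (hT.from YB), Category.comp_id, hYB,
    tensorHom_def' fA]
  simp only [MonoidalCategory.whiskerLeft_comp, Category.assoc, tensorHom_id, id_tensorHom]
  rw [← associator_naturality_right_assoc, ← whisker_exchange_assoc,
    ← whisker_exchange_assoc, ← whisker_exchange_assoc]
  congr 1
  monoidal
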